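/- For any opposite-sign compatible T-quadruple (x,y) \in CTQ_o, the sizes differ: |x| \ne |y|. -/

import Mathlib

/-- Adjacency of simple roots `α_i`, `α_j` of `sl(n)` (equivalent to
`(α_i, α_j) = -1`): the indices differ by one. -/
def Adj (i j : ℕ) : Prop := i + 1 = j ∨ j + 1 = i

/-- One application of the additive extension of `T` to positive roots.  A positive
root `e_i - e_j` (`i < j`) is encoded as the pair `(i, j)`; its simple-root support is
`Finset.Ico i j`.  `TStep T Γ1 α β` says that all simple constituents of `α` lie in
`Γ1` and that `T` maps the support of `α` onto the support of `β` (possibly reversing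
orientation), i.e. `T α = β`. -/
def TStep (T : ℕ → ℕ) (Γ1 : Finset ℕ) (α β : ℕ × ℕ) : Prop :=
  α.1 < α.2 ∧ β.1 < β.2 ∧ Finset.Ico α.1 α.2 ⊆ Γ1 ∧
    Finset.image T (Finset.Ico α.1 α.2) = Finset.Ico β.1 β.2

/-- `TIter T Γ1 k α β` says `T^k α = β` for positive roots `α`, `β`. -/
def TIter (T : ℕ → ℕ) (Γ1 : Finset ℕ) : ℕ → ℕ × ℕ → ℕ × ℕ → Prop
  | 0, α, β => α = β
  | k + 1, α, β => ∃ γ, TStep T Γ1 α γ ∧ TIter T Γ1 k γ β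

/-- A Belavin–Drinfeld triple of type `A_{n-1}`: `Γ1, Γ2` are subsets of the simple
roots `{1, …, n-1}` of `sl(n)`, `T` restricts to a bijection `Γ1 → Γ2` preserving the
inner product (equivalently, preserving adjacency), and `T` is nilpotent. -/
def BDTriple (n : ℕ) (Γ1 Γ2 : Finset ℕ) (T : ℕ → ℕ) : Prop :=
  Γ1 ⊆ Finset.Ico 1 n ∧ Γ2 ⊆ Finset.Ico 1 n ∧
    Set.BijOn T ↑Γ1 ↑Γ2 ∧
    (∀ i ∈ Γ1, ∀ j ∈ Γ1, (Adj (T i) (T j) ↔ Adj i j)) ∧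
    (∀ i ∈ Γ1, ∃ k, 1 ≤ k ∧ T^[k] i ∉ Γ1)

open Matrix Kronecker

/-- A `T`-pair for a Belavin–Drinfeld triple: the data of a positive root `α` (with
`1 ≤ α.1 < α.2 ≤ n`) and `β = T^k α`.  If `pos = true` this encodes the positive
`T`-pair `(T^k α, -α)` (requiring `k > 0`); if `pos = false` it encodes the negative
`T`-pair `(-α, T^k α)` (allowing `k = 0`).  `Ord = k` and the size is `|α| = α.2 - α.1`. -/
structure TPair (n : ℕ) (T : ℕ → ℕ) (Γ1 : Finset ℕ) where
  pos : Bool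
  k : ℕ
  α : ℕ × ℕ
  β : ℕ × ℕ
  hα : α.1 < α.2
  hlo : 1 ≤ α.1 ∧ 1 ≤ β.1
  hhi : α.2 ≤ n ∧ β.2 ≤ n
  hiter : TIter T Γ1 k α β
  hpos : pos = true → 0 < k

open Fin.NatCast in
/-- The elementary matrix `e_{e_i - e_j} = e_{ij}` attached to a root `e_i - e_j`,
encoded as the pair `(i, j)` with `1 ≤ i, j ≤ n` (indices taken in `Fin (n+1)`). -/
noncomputable def Eroot (n : ℕ) (p : ℕ × ℕ) : Matrix (Fin (n + 1)) (Fin (n + 1)) ℂ :=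
  single (p.1 : Fin (n + 1)) (p.2 : Fin (n + 1)) 1

/-- The elementary tensor `E_x` attached to a `T`-pair `x`: for a positive pair
`(β, -α)` it is `e_β ⊗ e_{-α}`, and for a negative pair `(-α, β)` it is
`e_{-α} ⊗ e_β`, where `e_{-(e_i - e_j)} = e_{ji}`. -/
noncomputable def Epair {n : ℕ} {T : ℕ → ℕ} {Γ1 : Finset ℕ} (x : TPair n T Γ1) :
    Matrix (Fin (n + 1) × Fin (n + 1)) (Fin (n + 1) × Fin (n + 1)) ℂ :=
  if x.pos then Eroot n x.β ⊗ₖ Eroot n (x.α.2, x.α.1)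
  else Eroot n (x.α.2, x.α.1) ⊗ₖ Eroot n x.β

section Aux

lemma TStep_len {T : ℕ → ℕ} {Γ1 : Finset ℕ} {α β : ℕ × ℕ}
    (hinj : Set.InjOn T ↑Γ1) (h : TStep T Γ1 α β) : β.2 - β.1 = α.2 - α.1 := by
  obtain ⟨-, -, hsub, himg⟩ := h
  have := congrArg Finset.card himg
  rw [Finset.card_image_of_injOn (hinj.mono (Finset.coe_subset.2 hsub)),
    Nat.card_Ico, Nat.card_Ico] at this
  omega

lemma TIter_len {T : ℕ → ℕ} {Γ1 : Finset ℕ} (hinj : Set.InjOn T ↑Γ1) :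
    ∀ {k : ℕ} {α β : ℕ × ℕ}, TIter T Γ1 k α β → β.2 - β.1 = α.2 - α.1 := by
  intro k
  induction k with
  | zero => intro α β h; rw [show α = β from h]
  | succ k ih =>
    rintro α β ⟨γ, hs, hi⟩
    rw [ih hi, TStep_len hinj hs]

lemma TIter_trans {T : ℕ → ℕ} {Γ1 : Finset ℕ} :
    ∀ {k m : ℕ} {α β γ : ℕ × ℕ}, TIter T Γ1 k α β → TIter T Γ1 m β γ →
      TIter T Γ1 (k + m) α γ := by
  intro k
  induction k with
  | zero => intro m α β γ h1 h2; rw [show α = β from h1]; simpa using h2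
  | succ k ih =>
    rintro m α β γ ⟨δ, hs, hi⟩ h2
    rw [show k + 1 + m = (k + m) + 1 by omega]
    exact ⟨δ, hs, ih hi h2⟩

lemma TIter_image {T : ℕ → ℕ} {Γ1 : Finset ℕ} :
    ∀ {k : ℕ} {α β : ℕ × ℕ}, TIter T Γ1 k α β →
      Finset.image (T^[k]) (Finset.Ico α.1 α.2) = Finset.Ico β.1 β.2 := by
  intro k
  induction k with
  | zero => intro α β h; rw [show α = β from h]; simp
  | succ k ih =>
    rintro α β ⟨γ, hs, hi⟩
    rw [Function.iterate_succ, ← Finset.image_image, hs.2.2.2, ih hi]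

lemma TIter_subset {T : ℕ → ℕ} {Γ1 : Finset ℕ} {k : ℕ} {α β : ℕ × ℕ}
    (hk : 0 < k) (h : TIter T Γ1 k α β) : Finset.Ico α.1 α.2 ⊆ Γ1 := by
  obtain ⟨k, rfl⟩ := Nat.exists_eq_succ_of_ne_zero hk.ne'
  obtain ⟨γ, hs, -⟩ := h
  exact hs.2.2.1

lemma TIter_prefix {T : ℕ → ℕ} {Γ1 : Finset ℕ} :
    ∀ {k j : ℕ} {α β : ℕ × ℕ}, j ≤ k → TIter T Γ1 k α β →
      ∃ γ, TIter T Γ1 j α γ ∧ TIter T Γ1 (k - j) γ β := by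
  intro k
  induction k with
  | zero =>
    intro j α β hj h
    obtain rfl := Nat.le_zero.1 hj
    exact ⟨α, rfl, by simpa using h⟩
  | succ k ih =>
    intro j α β hj h
    match j with
    | 0 => exact ⟨α, rfl, by simpa using h⟩
    | j + 1 =>
      obtain ⟨δ, hs, hi⟩ := h
      obtain ⟨γ, h1, h2⟩ := ih (Nat.succ_le_succ_iff.1 hj) hi
      exact ⟨γ, ⟨δ, hs, h1⟩, by simpa [Nat.succ_sub_succ] using h2⟩

lemma cycle_contra {n : ℕ} {Γ1 Γ2 : Finset ℕ} {T : ℕ → ℕ}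
    (h : BDTriple n Γ1 Γ2 T) {K : ℕ} (hK : 0 < K) {α : ℕ × ℕ} (hα : α.1 < α.2)
    (hc : TIter T Γ1 K α α) : False := by
  obtain ⟨-, -, -, -, hnil⟩ := h
  have hmem : α.1 ∈ Finset.Ico α.1 α.2 := Finset.mem_Ico.2 ⟨le_refl _, hα⟩
  obtain ⟨k, -, hk2⟩ := hnil α.1 (TIter_subset hK hc hmem)
  have hrep : ∀ m, TIter T Γ1 (m * K) α α := by
    intro m
    induction m with
    | zero => rw [Nat.zero_mul]; exact rfl
    | succ m ih =>
      have := TIter_trans ih hc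
      rwa [show (m + 1) * K = m * K + K by ring]
  have hjk : k ≤ (k + 1) * K := by
    calc k ≤ (k + 1) * 1 := by omega
    _ ≤ (k + 1) * K := Nat.mul_le_mul_left _ hK
  obtain ⟨γ, h1, h2⟩ := TIter_prefix hjk (hrep (k + 1))
  have hpos : 0 < (k + 1) * K - k := by
    have : k < (k + 1) * K := lt_of_lt_of_le (Nat.lt_succ_self k)
      (le_trans (by omega) (Nat.mul_le_mul_left (k+1) hK))
    omega
  exact hk2 (TIter_subset hpos h2 ((TIter_image h1) ▸ Finset.mem_image_of_mem _ hmem))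

open Fin.NatCast in
lemma fin_cast_inj {n a b : ℕ} (ha : a ≤ n) (hb : b ≤ n)
    (h : (a : Fin (n + 1)) = (b : Fin (n + 1))) : a = b := by
  have := congrArg Fin.val h
  rwa [Fin.val_natCast, Fin.val_natCast, Nat.mod_eq_of_lt (by omega),
    Nat.mod_eq_of_lt (by omega)] at this

open Matrix in
lemma kron_std_ne_zero {n : ℕ} {a b c d a' b' c' d' : Fin (n + 1)}
    (h : ((single a b (1 : ℂ)) ⊗ₖ (single c d (1 : ℂ))) *
         ((single a' b' (1 : ℂ)) ⊗ₖ (single c' d' (1 : ℂ))) ≠ 0) :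
    b = a' ∧ d = c' := by
  rw [← Matrix.mul_kronecker_mul] at h
  constructor
  · by_contra hne
    exact h (by rw [Matrix.single_mul_single_of_ne (h := hne), Matrix.zero_kronecker])
  · by_contra hne
    exact h (by rw [Matrix.single_mul_single_of_ne (h := hne), Matrix.kronecker_zero])

end Aux

/-- For any opposite-sign compatible `T`-quadruple `(x, y)` (i.e. `T`-pairs of
opposite signs with `E_x E_y ≠ 0`), the sizes differ: `|x| ≠ |y|`. -/
theorem opposite_sign_sizes_differ (n : ℕ) (Γ1 Γ2 : Finset ℕ) (T : ℕ → ℕ)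
    (h : BDTriple n Γ1 Γ2 T) (x y : TPair n T Γ1) (hsign : x.pos ≠ y.pos)
    (hE : Epair x * Epair y ≠ 0) :
    x.α.2 - x.α.1 ≠ y.α.2 - y.α.1 := by
  
  intro hsize
  have hinj : Set.InjOn T ↑Γ1 := h.2.2.1.injOn
  have hxα := x.hα
  have hyα := y.hα
  have hxβ : x.β.2 - x.β.1 = x.α.2 - x.α.1 := TIter_len hinj x.hiter
  have hyβ : y.β.2 - y.β.1 = y.α.2 - y.α.1 := TIter_len hinj y.hiter
  have hxβlt : x.β.1 < x.β.2 := by omega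
  have hyβlt : y.β.1 < y.β.2 := by omega
  open Fin.NatCast in
  have key : ((x.β.2 : Fin (n+1)) = (y.α.2 : Fin (n+1))) ∧
      ((x.α.1 : Fin (n+1)) = (y.β.1 : Fin (n+1))) := by
    rcases Bool.eq_false_or_eq_true x.pos with hx | hx <;>
      rcases Bool.eq_false_or_eq_true y.pos with hy | hy
    · exact absurd (hx.trans hy.symm) hsign
    · unfold Epair Eroot at hE
      rw [hx, hy] at hE
      simp only [Bool.false_eq_true, if_false, if_true] at hE
      obtain ⟨h1, h2⟩ := kron_std_ne_zero hE
      exact ⟨h1, h2⟩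
    · unfold Epair Eroot at hE
      rw [hx, hy] at hE
      simp only [Bool.false_eq_true, if_false, if_true] at hE
      obtain ⟨h1, h2⟩ := kron_std_ne_zero hE
      exact ⟨h2, h1⟩
    · exact absurd (hx.trans hy.symm) hsign
  have e1 : x.β.2 = y.α.2 := fin_cast_inj x.hhi.2 y.hhi.1 key.1
  have hxa1 : x.α.1 ≤ n := by have := x.hhi.1; omega
  have hyb1 : y.β.1 ≤ n := by have := y.hhi.2; omega
  have e2 : x.α.1 = y.β.1 := fin_cast_inj hxa1 hyb1 key.2
  have hβx : x.β = y.α := Prod.ext_iff.2 ⟨by omega, e1⟩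
  have hβy : y.β = x.α := Prod.ext_iff.2 ⟨e2.symm, by omega⟩
  have hc1 : TIter T Γ1 x.k x.α y.α := hβx ▸ x.hiter
  have hc2 : TIter T Γ1 y.k y.α x.α := hβy ▸ y.hiter
  have hcyc := TIter_trans hc1 hc2
  have hK : 0 < x.k + y.k := by
    rcases Bool.eq_false_or_eq_true x.pos with hx | hx
    · have := x.hpos hx; omega
    · have hy : y.pos = true := by
        rcases Bool.eq_false_or_eq_true y.pos with hy | hy
        · exact hy
        · exact absurd (hx.trans hy.symm) hsign
      have := y.hpos hy; omega
  exact cycle_contra h hK x.hα hcyc
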